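/- Call a composition c = (c_1, …, c_p) with p ≥ 1 a cyclic Carlitz composition if no two adjacent parts are equal and either p = 1 or c_1 ≠ c_p. In ℚ[[x]], Σ_c x^{sum(c)}, summed over all cyclic Carlitz compositions c, equals A·(1 − B)^{-1} + C, where A, B, C ∈ ℚ[[x]] are the coefficientwise-convergent sums A = Σ_{i≥1} x^i·((1 + x^i)^{-1})^2, B = Σ_{i≥1} x^i·(1 + x^i)^{-1}, and C = Σ_{i≥1} x^{2i}·(1 + x^i)^{-1} (each summand has order ≥ i, so each coefficient of A, B, C is a finite sum, and 1 − B has constant coefficient 1, hence is invertible). -/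

import Mathlib

open PowerSeries Finset

/-- A Carlitz composition (possibly empty). -/
def Car (c : List ℕ) : Prop := (∀ x ∈ c, 0 < x) ∧ List.Chain' (· ≠ ·) c

lemma finite_comp (n : ℕ) (P : List ℕ → Prop) :
    Finite {c : List ℕ // Car c ∧ c.sum = n ∧ P c} := by
  have h : {c : List ℕ | Car c ∧ c.sum = n ∧ P c} ⊆
      (List.map (Fin.val) '' {l : List (Fin (n+1)) | l.length ≤ n}) := by
    rintro c ⟨⟨hpos, -⟩, hsum, -⟩
    refine ⟨c.map (fun x => (⟨min x n, by omega⟩ : Fin (n+1))), ?_, ?_⟩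
    · simp only [Set.mem_setOf_eq, List.length_map]
      calc c.length ≤ c.sum := List.length_le_sum_of_one_le c (fun i hi => hpos i hi)
        _ = n := hsum
    · rw [List.map_map]
      have : ∀ x ∈ c, x ≤ n := fun x hx => hsum ▸ List.single_le_sum (fun y _ => Nat.zero_le y) x hx
      conv_rhs => rw [← List.map_id c]
      apply List.map_congr_left
      intro x hx
      simp [Nat.min_eq_left (this x hx)]
  exact ((List.finite_length_le (Fin (n+1)) n).image _).subset h |>.to_subtype

instance (n : ℕ) (P : List ℕ → Prop) : Finite {c : List ℕ // Car c ∧ c.sum = n ∧ P c} :=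
  finite_comp n P

/-- count of Carlitz compositions of sum `n` satisfying `P`, as a rational. -/
noncomputable def cnt (P : List ℕ → Prop) (n : ℕ) : ℚ :=
  Nat.card {c : List ℕ // Car c ∧ c.sum = n ∧ P c}

lemma cnt_congr {P Q : List ℕ → Prop} (n : ℕ)
    (h : ∀ c, Car c → c.sum = n → (P c ↔ Q c)) : cnt P n = cnt Q n := by
  unfold cnt
  congr 1
  exact Nat.card_congr (Equiv.subtypeEquivRight fun c => by
    constructor
    · rintro ⟨h1, h2, h3⟩; exact ⟨h1, h2, (h c h1 h2).1 h3⟩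
    · rintro ⟨h1, h2, h3⟩; exact ⟨h1, h2, (h c h1 h2).2 h3⟩)

lemma cnt_split (P R : List ℕ → Prop) (n : ℕ) :
    cnt P n = cnt (fun c => P c ∧ R c) n + cnt (fun c => P c ∧ ¬ R c) n := by
  classical
  unfold cnt
  rw [← Nat.cast_add, ← Nat.card_sum]
  congr 1
  apply Nat.card_congr
  refine Equiv.symm ?_
  calc ({c : List ℕ // Car c ∧ c.sum = n ∧ P c ∧ R c} ⊕
        {c : List ℕ // Car c ∧ c.sum = n ∧ P c ∧ ¬ R c})
      ≃ ({c : {c : List ℕ // Car c ∧ c.sum = n ∧ P c} // R c.1} ⊕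
         {c : {c : List ℕ // Car c ∧ c.sum = n ∧ P c} // ¬ R c.1}) := by
        refine Equiv.sumCongr ?_ ?_
        · exact (Equiv.subtypeEquivRight (q := fun c => (Car c ∧ c.sum = n ∧ P c) ∧ R c)
            fun c => by tauto).trans
            (Equiv.subtypeSubtypeEquivSubtypeInter (fun c => Car c ∧ c.sum = n ∧ P c) R).symm
        · exact (Equiv.subtypeEquivRight (q := fun c => (Car c ∧ c.sum = n ∧ P c) ∧ ¬ R c)
            fun c => by tauto).trans
            (Equiv.subtypeSubtypeEquivSubtypeInter (fun c => Car c ∧ c.sum = n ∧ P c) (fun c => ¬ R c)).symm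
    _ ≃ {c : List ℕ // Car c ∧ c.sum = n ∧ P c} := Equiv.sumCompl _

lemma cnt_zero_of_empty {P : List ℕ → Prop} (n : ℕ)
    (h : ∀ c, Car c → c.sum = n → ¬ P c) : cnt P n = 0 := by
  unfold cnt
  have : IsEmpty {c : List ℕ // Car c ∧ c.sum = n ∧ P c} :=
    ⟨fun ⟨c, h1, h2, h3⟩ => h c h1 h2 h3⟩
  simp [Nat.card_of_isEmpty]
/-- A cyclic Carlitz composition: a nonempty composition (list of positive integers) with
no two adjacent parts equal, whose first and last parts differ unless it has one part. -/
def CyclicCarlitz (c : List ℕ) : Prop :=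
  c ≠ [] ∧ (∀ x ∈ c, 0 < x) ∧ List.Chain' (· ≠ ·) c ∧
    (c.length = 1 ∨ c.head? ≠ c.getLast?)

/-- `A = Σ_{i≥1} x^i((1+x^i)⁻¹)²`, defined coefficientwise (the summand for `i` has order
`≥ i`, so each coefficient is a finite sum). -/
noncomputable def serA : PowerSeries ℚ :=
  PowerSeries.mk fun n => ∑ i ∈ Finset.Icc 1 n,
    PowerSeries.coeff (R := ℚ) n (PowerSeries.X ^ i * ((1 + PowerSeries.X ^ i)⁻¹) ^ 2)

/-- `B = Σ_{i≥1} x^i(1+x^i)⁻¹`, defined coefficientwise. -/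
noncomputable def serB : PowerSeries ℚ :=
  PowerSeries.mk fun n => ∑ i ∈ Finset.Icc 1 n,
    PowerSeries.coeff (R := ℚ) n (PowerSeries.X ^ i * (1 + PowerSeries.X ^ i)⁻¹)

/-- `C = Σ_{i≥1} x^{2i}(1+x^i)⁻¹`, defined coefficientwise. -/
noncomputable def serC : PowerSeries ℚ :=
  PowerSeries.mk fun n => ∑ i ∈ Finset.Icc 1 n,
    PowerSeries.coeff (R := ℚ) n (PowerSeries.X ^ (2 * i) * (1 + PowerSeries.X ^ i)⁻¹)
lemma cnt_partition (P : List ℕ → Prop) (g : List ℕ → ℕ) (n : ℕ) (s : Finset ℕ)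
    (hg : ∀ c, Car c → c.sum = n → P c → g c ∈ s) :
    cnt P n = ∑ i ∈ s, cnt (fun c => P c ∧ g c = i) n := by
  classical
  induction s using Finset.induction generalizing P with
  | empty =>
    simp only [Finset.sum_empty]
    exact cnt_zero_of_empty n (fun c h1 h2 hP => by simpa using hg c h1 h2 hP)
  | @insert a s ha ih =>
    rw [Finset.sum_insert ha, cnt_split P (fun c => g c = a) n]
    congr 1
    rw [ih (fun c => P c ∧ ¬ g c = a) (fun c h1 h2 ⟨hP, hne⟩ => by
      have := hg c h1 h2 hP; simp only [Finset.mem_insert] at this; tauto)]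
    exact Finset.sum_congr rfl fun i hi => cnt_congr n fun c _ _ => by
      constructor
      · rintro ⟨⟨hP, -⟩, hgi⟩; exact ⟨hP, hgi⟩
      · rintro ⟨hP, hgi⟩; exact ⟨⟨hP, fun h => ha (h ▸ hgi ▸ hi)⟩, hgi⟩

lemma cnt_nil (n : ℕ) : cnt (fun c => c = []) n = if n = 0 then 1 else 0 := by
  unfold cnt
  split_ifs with h
  · subst h
    rw [Nat.card_eq_one_iff_unique.2 ?_]
    · simp
    constructor
    · exact ⟨fun ⟨c, _, _, hc⟩ ⟨d, _, _, hd⟩ => by simp [Subtype.ext_iff, hc, hd]⟩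
    · exact ⟨⟨[], ⟨by simp, List.isChain_nil⟩, by simp, rfl⟩⟩
  · have : IsEmpty {c : List ℕ // Car c ∧ c.sum = n ∧ c = []} :=
      ⟨fun ⟨c, _, h2, h3⟩ => h (by simp [h3] at h2; omega)⟩
    simp [Nat.card_of_isEmpty]

lemma cnt_len_one (n : ℕ) : cnt (fun c => c.length = 1) n = if 1 ≤ n then 1 else 0 := by
  unfold cnt
  split_ifs with h
  · rw [Nat.card_eq_one_iff_unique.2 ?_]
    · simp
    constructor
    · constructor
      rintro ⟨c, -, hs, hc⟩ ⟨d, -, hs', hd⟩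
      obtain ⟨x, rfl⟩ := List.length_eq_one_iff.1 hc
      obtain ⟨y, rfl⟩ := List.length_eq_one_iff.1 hd
      simp only [List.sum_cons, List.sum_nil, add_zero] at hs hs'
      simp [Subtype.ext_iff, hs, hs']
    · exact ⟨⟨[n], ⟨by intro x hx; simp at hx; omega, List.isChain_singleton n⟩, by simp, rfl⟩⟩
  · apply @Nat.cast_eq_zero ℚ _ _ |>.2
    have : IsEmpty {c : List ℕ // Car c ∧ c.sum = n ∧ c.length = 1} := by
      constructor
      rintro ⟨c, ⟨hpos, -⟩, hs, hc⟩
      obtain ⟨x, rfl⟩ := List.length_eq_one_iff.1 hc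
      have := hpos x (by simp)
      simp only [List.sum_cons, List.sum_nil, add_zero] at hs
      omega
    simp [Nat.card_of_isEmpty]
lemma cnt_lt {P : List ℕ → Prop} {i : ℕ} (n : ℕ) (h : n < i)
    (hP : ∀ c, P c → i ∈ c) : cnt P n = 0 := by
  apply cnt_zero_of_empty
  intro c hcar hsum hPc
  have hmem := hP c hPc
  have := List.single_le_sum (l := c) (fun y _ => Nat.zero_le y) i hmem
  omega

lemma cnt_reverse (i n : ℕ) :
    cnt (fun c => c.head? = some i) n = cnt (fun c => c.getLast? = some i) n := by
  unfold cnt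
  congr 1
  apply Nat.card_congr
  refine ⟨fun c => ⟨c.1.reverse, ?_⟩, fun c => ⟨c.1.reverse, ?_⟩, fun c => by simp, fun c => by simp⟩
  · obtain ⟨c, ⟨hpos, hch⟩, hsum, hh⟩ := c
    refine ⟨⟨fun x hx => hpos x (List.mem_reverse.1 hx),
      List.isChain_reverse.2 (hch.imp fun a b h => Ne.symm h)⟩,
      by rw [List.sum_reverse]; exact hsum, by simpa using hh⟩
  · obtain ⟨c, ⟨hpos, hch⟩, hsum, hh⟩ := c
    refine ⟨⟨fun x hx => hpos x (List.mem_reverse.1 hx),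
      List.isChain_reverse.2 (hch.imp fun a b h => Ne.symm h)⟩,
      by rw [List.sum_reverse]; exact hsum, by simpa using hh⟩

lemma cnt_append (i n : ℕ) (H : List ℕ → Prop) (hi : 0 < i)
    (hH1 : ∀ c : List ℕ, c ≠ [] → (H (c ++ [i]) ↔ H c)) (hH2 : H [i]) :
    cnt (fun c => H c ∧ c.getLast? = some i) (n + i)
      = cnt (fun c => c.getLast? ≠ some i ∧ (c = [] ∨ H c)) n := by
  unfold cnt
  congr 1
  symm
  have key : ∀ c : List ℕ, (Car c ∧ c.sum = n ∧ (c.getLast? ≠ some i ∧ (c = [] ∨ H c))) →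
      Car (c ++ [i]) ∧ (c ++ [i]).sum = n + i ∧
        (H (c ++ [i]) ∧ (c ++ [i]).getLast? = some i) := by
    rintro c ⟨⟨hpos, hch⟩, hsum, hlast, hor⟩
    refine ⟨⟨?_, ?_⟩, by simp [hsum], ?_, List.getLast?_concat⟩
    · intro x hx
      rcases List.mem_append.1 hx with h | h
      · exact hpos x h
      · simp at h; omega
    · refine List.isChain_append.2 ⟨hch, List.isChain_singleton i, ?_⟩
      intro x hx y hy
      simp only [List.head?_cons, Option.mem_def, Option.some.injEq] at hy
      subst hy
      intro hxy
      exact hlast (hxy ▸ hx)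
    · rcases hor with rfl | hH
      · simpa using hH2
      · rcases eq_or_ne c [] with rfl | hne
        · simpa using hH2
        · exact (hH1 c hne).2 hH
  apply Nat.card_eq_of_bijective (f := fun c => ⟨c.1 ++ [i], key c.1 c.2⟩)
  constructor
  · rintro ⟨c, hc⟩ ⟨d, hd⟩ h
    simp only [Subtype.mk.injEq, List.append_left_inj] at h
    exact Subtype.ext h
  · rintro ⟨d, ⟨hpos, hch⟩, hsum, hHd, hlast⟩
    have hd : d.dropLast ++ [i] = d := List.dropLast_append_getLast? i hlast
    have hch' := hd ▸ hch
    have hsplit := List.isChain_append.1 hch'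
    have hlast' : d.dropLast.getLast? ≠ some i := by
      intro hcon
      exact hsplit.2.2 i hcon i (by simp) rfl
    refine ⟨⟨d.dropLast, ⟨fun x hx => hpos x (by rw [← hd]; exact List.mem_append_left _ hx),
      hsplit.1⟩, ?_, hlast', ?_⟩, Subtype.ext hd⟩
    · have : d.dropLast.sum + i = n + i := by
        rw [← hsum]
        conv_rhs => rw [← hd]
        simp
      omega
    · rcases eq_or_ne d.dropLast [] with hnil | hne
      · exact Or.inl hnil
      · exact Or.inr ((hH1 _ hne).1 (by rw [hd]; exact hHd))
noncomputable def serL : PowerSeries ℚ := PowerSeries.mk fun n => cnt (fun _ => True) n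
noncomputable def serLi (i : ℕ) : PowerSeries ℚ :=
  PowerSeries.mk fun n => cnt (fun c => c.getLast? = some i) n
noncomputable def serDi (i : ℕ) : PowerSeries ℚ :=
  PowerSeries.mk fun n => cnt (fun c => c.head? = some i ∧ c.getLast? = some i) n

/-- coefficientwise sum over `i ≥ 1` of a family of series of order `≥ i`. -/
noncomputable def SigS (F : ℕ → PowerSeries ℚ) : PowerSeries ℚ :=
  PowerSeries.mk fun n => ∑ i ∈ Finset.Icc 1 n, PowerSeries.coeff (R := ℚ) n (F i)

lemma coeff_SigS (F : ℕ → PowerSeries ℚ) (n : ℕ) :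
    PowerSeries.coeff (R := ℚ) n (SigS F) = ∑ i ∈ Finset.Icc 1 n, PowerSeries.coeff (R := ℚ) n (F i) :=
  PowerSeries.coeff_mk _ _

lemma SigS_congr {F G : ℕ → PowerSeries ℚ} (h : ∀ i, 1 ≤ i → F i = G i) :
    SigS F = SigS G := by
  apply PowerSeries.ext fun n => ?_
  rw [coeff_SigS, coeff_SigS]
  exact Finset.sum_congr rfl fun i hi => by rw [h i (Finset.mem_Icc.1 hi).1]

lemma SigS_mul (F : ℕ → PowerSeries ℚ) (G : PowerSeries ℚ) (hF : ∀ i, (PowerSeries.X : ℚ⟦X⟧)^i ∣ F i) :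
    SigS F * G = SigS fun i => F i * G := by
  apply PowerSeries.ext fun n => ?_
  rw [PowerSeries.coeff_mul, coeff_SigS]
  have step1 : ∀ p ∈ Finset.HasAntidiagonal.antidiagonal n,
      PowerSeries.coeff (R := ℚ) p.1 (SigS F) * PowerSeries.coeff (R := ℚ) p.2 G
        = ∑ i ∈ Finset.Icc 1 n, PowerSeries.coeff (R := ℚ) p.1 (F i) * PowerSeries.coeff (R := ℚ) p.2 G := by
    intro p hp
    rw [coeff_SigS, Finset.sum_mul]
    apply Finset.sum_subset
    · apply Finset.Icc_subset_Icc_right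
      exact le_of_add_le_left (Finset.HasAntidiagonal.mem_antidiagonal.1 hp).le
    · intro i _ hi
      have hpi : p.1 < i := by
        rcases Nat.lt_or_ge p.1 i with h | h
        · exact h
        · exfalso; apply hi; simp only [Finset.mem_Icc] at *; omega
      obtain ⟨h, hh⟩ := hF i
      rw [hh, PowerSeries.coeff_X_pow_mul', if_neg (by omega)]
      ring
  rw [Finset.sum_congr rfl step1, Finset.sum_comm]
  apply Finset.sum_congr rfl fun i _ => ?_
  rw [PowerSeries.coeff_mul]
open PowerSeries in
lemma serLi_eq (i : ℕ) (hi : 0 < i) :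
    serLi i * (1 + X ^ i) = X ^ i * serL := by
  apply PowerSeries.ext fun n => ?_
  rw [mul_add, mul_one, map_add, PowerSeries.coeff_mul_X_pow', PowerSeries.coeff_X_pow_mul']
  rcases Nat.lt_or_ge n i with h | h
  · rw [if_neg (by omega), if_neg (by omega), add_zero]
    simp only [serLi, PowerSeries.coeff_mk]
    exact cnt_lt n h fun c hc => List.mem_of_mem_getLast? hc
  · obtain ⟨m, rfl⟩ : ∃ m, n = m + i := ⟨n - i, by omega⟩
    rw [if_pos (by omega), if_pos (by omega)]
    simp only [serLi, serL, PowerSeries.coeff_mk, Nat.add_sub_cancel]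
    have key := cnt_append i m (fun _ => True) hi (fun c _ => Iff.rfl) trivial
    have e1 : cnt (fun c => c.getLast? = some i) (m + i)
        = cnt (fun c => (fun _ => True) c ∧ c.getLast? = some i) (m + i) :=
      cnt_congr _ fun c _ _ => by tauto
    have e2 : cnt (fun c => c.getLast? ≠ some i ∧ (c = [] ∨ True)) m
        = cnt (fun c => (fun _ => True) c ∧ ¬ (c.getLast? = some i)) m :=
      cnt_congr _ fun c _ _ => by tauto
    have e7 : cnt (fun c => c.getLast? = some i) m
        = cnt (fun c => (fun _ => True) c ∧ c.getLast? = some i) m :=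
      cnt_congr _ fun c _ _ => by tauto
    rw [e1, key, e2, e7, cnt_split (fun _ => True) (fun c => c.getLast? = some i) m]
    ring

open PowerSeries in
lemma serDi_eq (i : ℕ) (hi : 0 < i) :
    serDi i * (1 + X ^ i) = X ^ i * (serLi i + 1) := by
  apply PowerSeries.ext fun n => ?_
  rw [mul_add, mul_one, map_add, PowerSeries.coeff_mul_X_pow', PowerSeries.coeff_X_pow_mul']
  rcases Nat.lt_or_ge n i with h | h
  · rw [if_neg (by omega), if_neg (by omega), add_zero]
    simp only [serDi, PowerSeries.coeff_mk]
    exact cnt_lt n h fun c hc => List.mem_of_mem_getLast? hc.2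
  · obtain ⟨m, rfl⟩ : ∃ m, n = m + i := ⟨n - i, by omega⟩
    rw [if_pos (by omega), if_pos (by omega)]
    simp only [serDi, serLi, PowerSeries.coeff_mk, Nat.add_sub_cancel, map_add,
      PowerSeries.coeff_one]
    have key := cnt_append i m (fun c => c.head? = some i) hi
      (fun c hc => by
        cases c with
        | nil => simp at hc
        | cons a l => simp) (by simp)
    rw [key]
    have e2 : cnt (fun c => c.getLast? ≠ some i ∧ (c = [] ∨ c.head? = some i)) m
        = cnt (fun c => (c.getLast? ≠ some i ∧ (c = [] ∨ c.head? = some i)) ∧ c = []) m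
          + cnt (fun c => (c.getLast? ≠ some i ∧ (c = [] ∨ c.head? = some i)) ∧ ¬ c = []) m :=
      cnt_split _ _ m
    rw [e2]
    have e3 : cnt (fun c => (c.getLast? ≠ some i ∧ (c = [] ∨ c.head? = some i)) ∧ c = []) m
        = cnt (fun c => c = []) m :=
      cnt_congr _ fun c _ _ => by
        constructor
        · tauto
        · rintro rfl; exact ⟨⟨by simp, Or.inl rfl⟩, rfl⟩
    have e4 : cnt (fun c => (c.getLast? ≠ some i ∧ (c = [] ∨ c.head? = some i)) ∧ ¬ c = []) m
        = cnt (fun c => c.head? = some i ∧ ¬ (c.getLast? = some i)) m :=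
      cnt_congr _ fun c _ _ => by
        constructor
        · rintro ⟨⟨hl, hor⟩, hne⟩; exact ⟨hor.resolve_left hne, hl⟩
        · rintro ⟨hh, hl⟩
          refine ⟨⟨hl, Or.inr hh⟩, ?_⟩
          rintro rfl; simp at hh
    rw [e3, e4, cnt_nil]
    have e5 : cnt (fun c => c.head? = some i) m
        = cnt (fun c => c.head? = some i ∧ c.getLast? = some i) m
          + cnt (fun c => c.head? = some i ∧ ¬ (c.getLast? = some i)) m :=
      cnt_split _ _ m
    have e6 := cnt_reverse i m
    -- goal : d(m+i) + d(m) = l(m) + [m=0]  where d(m+i) has been rewritten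
    rw [← e6, e5]
    ring
open PowerSeries in
lemma constCoeff_one_add_X_pow (i : ℕ) (hi : 0 < i) :
    constantCoeff (R := ℚ) (1 + X ^ i : ℚ⟦X⟧) ≠ 0 := by
  have : constantCoeff (R := ℚ) (X ^ i : ℚ⟦X⟧) = 0 := by
    rw [map_pow, constantCoeff_X, zero_pow hi.ne']
  rw [map_add, this, map_one, add_zero]
  exact one_ne_zero

open PowerSeries in
lemma inv_cancel_i (i : ℕ) (hi : 0 < i) :
    (1 + X ^ i : ℚ⟦X⟧) * (1 + X ^ i)⁻¹ = 1 :=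
  PowerSeries.mul_inv_cancel _ (constCoeff_one_add_X_pow i hi)

open PowerSeries in
lemma serLi_formula (i : ℕ) (hi : 0 < i) :
    serLi i = X ^ i * (1 + X ^ i)⁻¹ * serL := by
  calc serLi i = serLi i * ((1 + X ^ i) * (1 + X ^ i)⁻¹) := by
        rw [inv_cancel_i i hi, mul_one]
    _ = (serLi i * (1 + X ^ i)) * (1 + X ^ i)⁻¹ := by ring
    _ = (X ^ i * serL) * (1 + X ^ i)⁻¹ := by rw [serLi_eq i hi]
    _ = X ^ i * (1 + X ^ i)⁻¹ * serL := by ring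

open PowerSeries in
lemma serDi_formula (i : ℕ) (hi : 0 < i) :
    serDi i = X ^ i * (1 + X ^ i)⁻¹ * (serLi i + 1) := by
  calc serDi i = serDi i * ((1 + X ^ i) * (1 + X ^ i)⁻¹) := by
        rw [inv_cancel_i i hi, mul_one]
    _ = (serDi i * (1 + X ^ i)) * (1 + X ^ i)⁻¹ := by ring
    _ = (X ^ i * (serLi i + 1)) * (1 + X ^ i)⁻¹ := by rw [serDi_eq i hi]
    _ = X ^ i * (1 + X ^ i)⁻¹ * (serLi i + 1) := by ring

open PowerSeries in
lemma E3 (i : ℕ) (hi : 0 < i) :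
    X ^ i * ((1 + X ^ i)⁻¹) ^ 2 * serL
      = serLi i - serDi i + X ^ i - X ^ (2 * i) * (1 + X ^ i : ℚ⟦X⟧)⁻¹ := by
  have hv := inv_cancel_i i hi
  have h2 : (X : ℚ⟦X⟧) ^ (2 * i) = X ^ i * X ^ i := by rw [two_mul, pow_add]
  rw [h2]
  conv_rhs => rw [serDi_formula i hi, serLi_formula i hi]
  linear_combination (X ^ i * (1 + X ^ i)⁻¹ * serL + X ^ i) * hv

lemma SigS_add (F G : ℕ → PowerSeries ℚ) :
    SigS F + SigS G = SigS (fun i => F i + G i) := by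
  apply PowerSeries.ext fun n => ?_
  simp [coeff_SigS, Finset.sum_add_distrib]
lemma partition_last (n : ℕ) :
    cnt (fun c => c ≠ []) n
      = ∑ i ∈ Finset.Icc 1 n, cnt (fun c => c.getLast? = some i) n := by
  rw [cnt_partition (fun c => c ≠ []) (fun c => c.getLast?.getD 0) n (Finset.Icc 1 n) ?hg]
  case hg =>
    intro c hcar hsum hne
    obtain ⟨a, ha⟩ := Option.isSome_iff_exists.1 (List.getLast?_isSome.2 hne)
    have hmem := List.mem_of_mem_getLast? (l := c) (a := a) ha
    have h1 := hcar.1 a hmem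
    have h2 := List.single_le_sum (l := c) (fun y _ => Nat.zero_le y) a hmem
    show c.getLast?.getD 0 ∈ Finset.Icc 1 n
    rw [ha]
    simp only [Option.getD_some, Finset.mem_Icc]
    omega
  apply Finset.sum_congr rfl fun i hi => cnt_congr n fun c _ _ => ?_
  have h1 : 1 ≤ i := (Finset.mem_Icc.1 hi).1
  constructor
  · rintro ⟨hne, hg⟩
    obtain ⟨a, ha⟩ := Option.isSome_iff_exists.1 (List.getLast?_isSome.2 hne)
    simp only [ha, Option.getD_some] at hg
    rw [ha, hg]
  · intro hl
    refine ⟨?_, by rw [hl]; rfl⟩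
    rintro rfl; simp at hl

lemma partition_head_last (n : ℕ) :
    cnt (fun c => c ≠ [] ∧ c.head? = c.getLast?) n
      = ∑ i ∈ Finset.Icc 1 n, cnt (fun c => c.head? = some i ∧ c.getLast? = some i) n := by
  rw [cnt_partition _ (fun c => c.head?.getD 0) n (Finset.Icc 1 n) ?hg]
  case hg =>
    rintro c hcar hsum ⟨hne, hhl⟩
    obtain ⟨a, ha⟩ := Option.isSome_iff_exists.1 (List.isSome_head?.2 hne)
    have hmem := List.mem_of_mem_head? (l := c) (a := a) ha
    have h1 := hcar.1 a hmem
    have h2 := List.single_le_sum (l := c) (fun y _ => Nat.zero_le y) a hmem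
    show c.head?.getD 0 ∈ Finset.Icc 1 n
    rw [ha]
    simp only [Option.getD_some, Finset.mem_Icc]
    omega
  apply Finset.sum_congr rfl fun i hi => cnt_congr n fun c _ _ => ?_
  have h1 : 1 ≤ i := (Finset.mem_Icc.1 hi).1
  constructor
  · rintro ⟨⟨hne, hhl⟩, hg⟩
    obtain ⟨a, ha⟩ := Option.isSome_iff_exists.1 (List.isSome_head?.2 hne)
    simp only [ha, Option.getD_some] at hg
    subst hg
    exact ⟨ha, hhl ▸ ha⟩
  · rintro ⟨hh, hl⟩
    have hne : c ≠ [] := by rintro rfl; simp at hh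
    exact ⟨⟨hne, hh.trans hl.symm⟩, by rw [hh]; rfl⟩

open PowerSeries in
lemma serL_mul : serL * (1 - serB) = 1 := by
  have hstep : serB * serL = serL - 1 := by
    have h1 : serB = SigS (fun i => X ^ i * (1 + X ^ i)⁻¹) := rfl
    rw [h1, SigS_mul _ _ (fun i => dvd_mul_right _ _),
      SigS_congr (G := serLi) (fun i hi => (serLi_formula i hi).symm)]
    apply PowerSeries.ext fun n => ?_
    rw [coeff_SigS, map_sub, PowerSeries.coeff_one]
    simp only [serLi, serL, PowerSeries.coeff_mk]
    have e1 : ∑ i ∈ Finset.Icc 1 n, cnt (fun c => c.getLast? = some i) n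
        = cnt (fun c => c ≠ []) n := (partition_last n).symm
    rw [e1]
    have e2 := cnt_split (fun _ => True) (fun c => c = []) n
    have e3 : cnt (fun c => (fun _ => True) c ∧ c = []) n = cnt (fun c => c = []) n :=
      cnt_congr n fun c _ _ => by tauto
    have e4 : cnt (fun c => (fun _ => True) c ∧ ¬ c = []) n = cnt (fun c => c ≠ []) n :=
      cnt_congr n fun c _ _ => by tauto
    rw [e3, e4, cnt_nil] at e2
    rw [e2]
    split_ifs <;> ring
  calc serL * (1 - serB) = serL - serB * serL := by ring
    _ = serL - (serL - 1) := by rw [hstep]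
    _ = 1 := by ring

open PowerSeries in
lemma inv_one_sub_serB : (1 - serB)⁻¹ = serL := by
  rw [PowerSeries.inv_eq_iff_mul_eq_one]
  · exact serL_mul
  · have : constantCoeff (R := ℚ) serB = 0 := by
      have := coeff_SigS (fun i => X ^ i * (1 + X ^ i)⁻¹) 0
      simp only [Finset.Icc_self, Finset.Icc_eq_empty_of_lt (by norm_num : (1:ℕ) > 0)] at this
      rw [← PowerSeries.coeff_zero_eq_constantCoeff]
      show (PowerSeries.coeff (R := ℚ) 0) (SigS fun i => X ^ i * (1 + X ^ i)⁻¹) = 0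
      rw [coeff_SigS]
      simp
    rw [map_sub, map_one, this, sub_zero]
    exact one_ne_zero
open PowerSeries in
/-- The generating function of cyclic Carlitz compositions by sum of parts equals
`A(1 − B)⁻¹ + C`. -/
theorem stmt19 :
    PowerSeries.mk (fun n => (Nat.card {c : List ℕ // CyclicCarlitz c ∧ c.sum = n} : ℚ)) =
      serA * (1 - serB)⁻¹ + serC := by
  rw [inv_one_sub_serB]
  have hA : serA = SigS (fun i => X ^ i * ((1 + X ^ i)⁻¹) ^ 2) := rfl
  have hC : serC = SigS (fun i => X ^ (2 * i) * (1 + X ^ i)⁻¹) := rfl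
  rw [hA, hC, SigS_mul _ _ (fun i => dvd_mul_right _ _),
    SigS_congr (G := fun i => serLi i - serDi i + X ^ i - X ^ (2 * i) * (1 + X ^ i)⁻¹)
      (fun i hi => E3 i hi),
    SigS_add,
    SigS_congr (G := fun i => serLi i - serDi i + X ^ i) (fun i hi => by ring)]
  apply PowerSeries.ext fun n => ?_
  rw [PowerSeries.coeff_mk, coeff_SigS]
  have hCC : (Nat.card {c : List ℕ // CyclicCarlitz c ∧ c.sum = n} : ℚ)
      = cnt (fun c => c ≠ [] ∧ (c.length = 1 ∨ c.head? ≠ c.getLast?)) n := by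
    unfold cnt
    congr 1
    apply Nat.card_congr (Equiv.subtypeEquivRight fun c => ?_)
    unfold CyclicCarlitz Car
    tauto
  rw [hCC]
  have hsum : ∑ i ∈ Finset.Icc 1 n, PowerSeries.coeff (R := ℚ) n (serLi i - serDi i + X ^ i)
      = (∑ i ∈ Finset.Icc 1 n, cnt (fun c => c.getLast? = some i) n)
        - (∑ i ∈ Finset.Icc 1 n,
            cnt (fun c => c.head? = some i ∧ c.getLast? = some i) n)
        + (if 1 ≤ n then (1:ℚ) else 0) := by
    have hterm : ∀ i, PowerSeries.coeff (R := ℚ) n (serLi i - serDi i + X ^ i)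
        = cnt (fun c => c.getLast? = some i) n
          - cnt (fun c => c.head? = some i ∧ c.getLast? = some i) n
          + (if n = i then (1:ℚ) else 0) := by
      intro i
      rw [map_add, map_sub, PowerSeries.coeff_X_pow]
      simp only [serLi, serDi, PowerSeries.coeff_mk]
    rw [Finset.sum_congr rfl fun i _ => hterm i, Finset.sum_add_distrib,
      Finset.sum_sub_distrib, Finset.sum_ite_eq (Finset.Icc 1 n) n (fun _ => (1:ℚ))]
    have hite : (if n ∈ Finset.Icc 1 n then (1:ℚ) else 0) = (if 1 ≤ n then (1:ℚ) else 0) := by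
      simp [Finset.mem_Icc]
    rw [hite]
  rw [hsum, ← partition_last n, ← partition_head_last n]
  have s1 := cnt_split (fun c => c ≠ [])
    (fun c => c.length = 1 ∨ c.head? ≠ c.getLast?) n
  have s2 := cnt_split (fun c => c ≠ [] ∧ c.head? = c.getLast?)
    (fun c => c.length = 1) n
  have c1 : cnt (fun c => (c ≠ [] ∧ c.head? = c.getLast?) ∧ c.length = 1) n
      = cnt (fun c => c.length = 1) n := cnt_congr n fun c _ _ => by
    constructor
    · tauto
    · intro hl
      obtain ⟨x, rfl⟩ := List.length_eq_one_iff.1 hl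
      exact ⟨⟨by simp, by simp⟩, hl⟩
  have c2 : cnt (fun c => (c ≠ [] ∧ c.head? = c.getLast?) ∧ ¬ c.length = 1) n
      = cnt (fun c => c ≠ [] ∧ ¬ (c.length = 1 ∨ c.head? ≠ c.getLast?)) n :=
    cnt_congr n fun c _ _ => by tauto
  rw [c1, c2, cnt_len_one] at s2
  rw [s1, s2]
  ring
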